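/- Let X ∈ ℝ^{n×d} with XᵀX invertible (hence positive definite), let θ* ∈ ℝ^{d} with ‖θ*‖₂ = 1, let y = Xθ*, and let α ∈ ℝ. Let κ = λ_max(XᵀX)/λ_min(XᵀX) be the condition number of XᵀX. Define the gradient descent sequence θ^{(t+1)} = θ^{(t)} − η(XᵀXθ^{(t)} − Xᵀy) with step size η = 1/‖XᵀX‖ and initial point θ^{(0)} = 0 (corresponding to the looped transformer initialized with q^{(0)} = 0, whose output after T loops is α θ^{(T)}). Then after T iterations, the prediction error satisfies |⟨α θ^{(T)}, θ*⟩ − α| ≤ |α| · exp(−T/(2κ)). -/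

import Mathlib

open Matrix
open scoped RealInnerProductSpace

/-- The spectral norm (ℓ₂ operator norm) of a square real matrix. -/
noncomputable def matrixSpectralNorm {d : ℕ} (A : Matrix (Fin d) (Fin d) ℝ) : ℝ :=
  ‖Matrix.toEuclideanCLM (𝕜 := ℝ) A‖

lemma spectralNorm_eq_iSup {d : ℕ} [Nonempty (Fin d)] (A : Matrix (Fin d) (Fin d) ℝ)
    (hH : A.IsHermitian) (hpos : ∀ j, 0 ≤ hH.eigenvalues j) :
    matrixSpectralNorm A = ⨆ j, hH.eigenvalues j := by
  set b := hH.eigenvectorBasis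
  set μ := hH.eigenvalues
  set f := Matrix.toEuclideanCLM (𝕜 := ℝ) A
  have hfb : ∀ j, f (b j) = μ j • b j := by
    intro j
    apply (WithLp.equiv 2 _).injective
    show A.mulVec (b j) = _
    simpa using hH.mulVec_eigenvectorBasis j
  obtain ⟨jm, hjm⟩ := Finite.exists_max μ
  have hsup : (⨆ j, μ j) = μ jm :=
    le_antisymm (ciSup_le fun j => hjm j) (le_ciSup (Finite.bddAbove_range μ) jm)
  rw [hsup]
  apply le_antisymm
  · apply ContinuousLinearMap.opNorm_le_bound _ (hpos jm)
    intro x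
    have hsym := (Matrix.isHermitian_iff_isSymmetric.mp hH)
    have key : ∀ (v : EuclideanSpace ℝ (Fin d)) j, ⟪b j, f v⟫ = μ j * ⟪b j, v⟫ := by
      intro v j
      have h1 : f v = toEuclideanLin A v := rfl
      rw [h1, real_inner_comm, hsym _ _]
      have h2 : toEuclideanLin A (b j) = μ j • b j := hfb j
      rw [h2, inner_smul_right, real_inner_comm]
    have hn1 : ‖f x‖ ^ 2 = ∑ j, (μ j * ⟪b j, x⟫) ^ 2 := by
      rw [← real_inner_self_eq_norm_sq, ← b.sum_inner_mul_inner]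
      congr 1; ext j
      rw [real_inner_comm, key]; ring
    have hn2 : ‖x‖ ^ 2 = ∑ j, ⟪b j, x⟫ ^ 2 := by
      rw [← real_inner_self_eq_norm_sq, ← b.sum_inner_mul_inner]
      congr 1; ext j
      rw [real_inner_comm]; ring
    have hsq : ‖f x‖ ^ 2 ≤ (μ jm * ‖x‖) ^ 2 := by
      rw [hn1, mul_pow, hn2, Finset.mul_sum]
      apply Finset.sum_le_sum
      intro j _
      rw [mul_pow]
      exact mul_le_mul_of_nonneg_right (pow_le_pow_left₀ (hpos j) (hjm j) 2) (sq_nonneg _)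
    have h0 : (0:ℝ) ≤ μ jm * ‖x‖ := mul_nonneg (hpos jm) (norm_nonneg _)
    nlinarith [norm_nonneg (f x)]
  · have := f.le_opNorm (b jm)
    rw [hfb jm, norm_smul, b.orthonormal.1 jm] at this
    exact (by simpa [abs_of_nonneg (hpos jm)] using this : μ jm ≤ ‖f‖)


/-- **Main result**: for the linear vector generation task with in-context examples
`(X, y = Xθ*)`, `‖θ*‖₂ = 1`, query `α`, and condition number `κ = λ_max(XᵀX)/λ_min(XᵀX)`,
the looped transformer output `α θ^{(T)}` (where `θ^{(T)}` is the `T`-th gradient descent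
iterate with step `η = 1/‖XᵀX‖` from `θ^{(0)} = 0`) satisfies the prediction error bound
`|⟨α θ^{(T)}, θ*⟩ − α| ≤ |α| exp(−T/(2κ))`. -/
theorem looped_transformer_prediction_error
    (n d : ℕ) (X : Matrix (Fin n) (Fin d) ℝ) (hinv : IsUnit (Xᵀ * X))
    (θs : EuclideanSpace ℝ (Fin d)) (hθs : ‖θs‖ = 1)
    (y : Fin n → ℝ) (hy : y = X.mulVec θs) (α : ℝ)
    (hH : (Xᵀ * X).IsHermitian)
    (κ : ℝ) (hκ : κ = (⨆ i, hH.eigenvalues i) / ⨅ i, hH.eigenvalues i)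
    (η : ℝ) (hη : η = 1 / matrixSpectralNorm (Xᵀ * X))
    (θ : ℕ → EuclideanSpace ℝ (Fin d)) (hθ0 : θ 0 = 0)
    (hθ : ∀ t, θ (t + 1) = θ t - η • (show EuclideanSpace ℝ (Fin d) from
        WithLp.toLp 2 ((Xᵀ * X).mulVec (θ t) - Xᵀ.mulVec y)))
    (T : ℕ) :
    |(⟪α • θ T, θs⟫ : ℝ) - α| ≤ |α| * Real.exp (-(T : ℝ) / (2 * κ)) := by
  -- nonempty index
  haveI : Nonempty (Fin d) := by
    by_contra h
    rw [not_nonempty_iff] at h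
    have : θs = 0 := Subsingleton.elim _ _
    rw [this, norm_zero] at hθs; norm_num at hθs
  set A := Xᵀ * X with hA
  set b := hH.eigenvectorBasis with hb
  set μ := hH.eigenvalues with hμ
  -- positivity of eigenvalues
  have hpsd : A.PosSemidef := by
    have := Matrix.posSemidef_conjTranspose_mul_self X
    rwa [Matrix.conjTranspose_eq_transpose_of_trivial] at this
  have hnonneg : ∀ j, 0 ≤ μ j := fun j => hpsd.eigenvalues_nonneg j
  have hdet : A.det ≠ 0 := by
    intro h
    exact (Matrix.isUnit_iff_isUnit_det A |>.mp hinv).ne_zero (by exact_mod_cast h)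
  have hpos : ∀ j, 0 < μ j := by
    intro j
    rcases (hnonneg j).lt_or_eq with h | h
    · exact h
    · exfalso
      apply hdet
      rw [hH.det_eq_prod_eigenvalues]
      exact Finset.prod_eq_zero (Finset.mem_univ j) (by exact_mod_cast h.symm)
  -- max and min eigenvalues
  obtain ⟨jM, hjM⟩ := Finite.exists_max μ
  obtain ⟨jm, hjm⟩ := Finite.exists_min μ
  have hsup : (⨆ j, μ j) = μ jM :=
    le_antisymm (ciSup_le fun j => hjM j) (le_ciSup (Finite.bddAbove_range μ) jM)
  have hinf : (⨅ j, μ j) = μ jm :=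
    le_antisymm (ciInf_le (Finite.bddBelow_range μ) jm) (le_ciInf fun j => hjm j)
  have hN : matrixSpectralNorm A = μ jM := by rw [spectralNorm_eq_iSup A hH hnonneg, hsup]
  have hκ' : κ = μ jM / μ jm := by rw [hκ, hsup, hinf]
  have hη' : η = 1 / μ jM := by rw [hη, hN]
  set r : ℝ := 1 - μ jm / μ jM with hr
  have hr0 : 0 ≤ r := by
    rw [hr]
    have : μ jm / μ jM ≤ 1 := (div_le_one (hpos jM)).mpr (hjm jM)
    linarith
  have hrj : ∀ j, 0 ≤ 1 - η * μ j ∧ 1 - η * μ j ≤ r := by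
    intro j
    constructor
    · rw [hη']
      have : μ j / μ jM ≤ 1 := (div_le_one (hpos jM)).mpr (hjM j)
      rw [one_div, inv_mul_eq_div]; linarith
    · rw [hη', hr, one_div, inv_mul_eq_div]
      have h1 : μ jm / μ jM ≤ μ j / μ jM := by
        apply div_le_div_of_nonneg_right (hjm j) (hpos jM).le
      linarith
  -- the key induction
  have keyinner : ∀ (v : EuclideanSpace ℝ (Fin d)) j,
      ⟪b j, (show EuclideanSpace ℝ (Fin d) from WithLp.toLp 2 (A.mulVec v))⟫ = μ j * ⟪b j, v⟫ := by
    intro v j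
    have hsym := (Matrix.isHermitian_iff_isSymmetric.mp hH)
    have h1 : (show EuclideanSpace ℝ (Fin d) from WithLp.toLp 2 (A.mulVec v)) = toEuclideanLin A v := rfl
    rw [h1, real_inner_comm, hsym _ _]
    have h2 : toEuclideanLin A (b j) = μ j • b j := by
      apply (WithLp.equiv 2 _).injective
      show A.mulVec (b j) = _
      simpa using hH.mulVec_eigenvectorBasis j
    rw [h2, inner_smul_right, real_inner_comm]
  have main : ∀ t j, ⟪b j, θ t - θs⟫ = -((1 - η * μ j) ^ t * ⟪b j, θs⟫) := by
    intro t
    induction t with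
    | zero => intro j; simp [hθ0]
    | succ t ih =>
      intro j
      have step : θ (t+1) - θs = (θ t - θs) - η • (show EuclideanSpace ℝ (Fin d) from
          WithLp.toLp 2 (A.mulVec (θ t - θs))) := by
        have harg : (show EuclideanSpace ℝ (Fin d) from WithLp.toLp 2 (A.mulVec (θ t) - Xᵀ.mulVec y))
            = (show EuclideanSpace ℝ (Fin d) from WithLp.toLp 2 (A.mulVec (θ t - θs))) := by
          congr 1
          rw [hy, Matrix.mulVec_mulVec, Matrix.mulVec_sub]
        rw [hθ t, harg]
        abel
      rw [step, inner_sub_right, inner_smul_right, keyinner, WithLp.toLp_sub, WithLp.toLp_ofLp, WithLp.toLp_ofLp, ih j, pow_succ]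
      ring
  -- assemble
  have hip : (⟪θ T, θs⟫ : ℝ) - 1 = ∑ j, -((1 - η * μ j) ^ T * ⟪b j, θs⟫ ^ 2) := by
    have h1 : (⟪θs, θs⟫ : ℝ) = 1 := by
      rw [real_inner_self_eq_norm_sq, hθs]; norm_num
    have h2 : (⟪θ T, θs⟫ : ℝ) - 1 = ⟪θ T - θs, θs⟫ := by
      rw [inner_sub_left, h1]
    rw [h2, ← b.sum_inner_mul_inner (θ T - θs) θs]
    congr 1; ext j
    rw [show (⟪θ T - θs, b j⟫:ℝ) = ⟪b j, θ T - θs⟫ from real_inner_comm _ _, main T j]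
    ring
  have hsum1 : ∑ j, (⟪b j, θs⟫ : ℝ) ^ 2 = 1 := by
    have h := b.sum_inner_mul_inner θs θs
    rw [real_inner_self_eq_norm_sq, hθs, one_pow] at h
    rw [← h]
    congr 1; ext j
    rw [show (⟪θs, b j⟫:ℝ) = ⟪b j, θs⟫ from real_inner_comm _ _]; ring
  have habs : |(⟪θ T, θs⟫ : ℝ) - 1| ≤ r ^ T := by
    rw [hip]
    calc |∑ j, -((1 - η * μ j) ^ T * ⟪b j, θs⟫ ^ 2)|
        ≤ ∑ j, |(-((1 - η * μ j) ^ T * ⟪b j, θs⟫ ^ 2))| := Finset.abs_sum_le_sum_abs _ _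
      _ ≤ ∑ j, r ^ T * (⟪b j, θs⟫ : ℝ) ^ 2 := by
          apply Finset.sum_le_sum
          intro j _
          rw [abs_neg, abs_mul, abs_pow, abs_of_nonneg (hrj j).1, abs_of_nonneg (sq_nonneg _)]
          exact mul_le_mul_of_nonneg_right (pow_le_pow_left₀ (hrj j).1 (hrj j).2 T) (sq_nonneg _)
      _ = r ^ T := by rw [← Finset.mul_sum, hsum1, mul_one]
  -- exponential bound
  have hκpos : 0 < κ := by
    rw [hκ']; exact div_pos (hpos jM) (hpos jm)
  have hrexp : r ^ T ≤ Real.exp (-(T : ℝ) / (2 * κ)) := by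
    have h1 : r ≤ Real.exp (-(1/κ)) := by
      have := Real.add_one_le_exp (-(1/κ))
      have hrκ : r = 1 - 1/κ := by
        rw [hr, hκ', one_div_div]
      rw [hrκ]; linarith
    calc r ^ T ≤ (Real.exp (-(1/κ))) ^ T := pow_le_pow_left₀ hr0 h1 T
      _ = Real.exp (-(T : ℝ)/κ) := by
          rw [← Real.exp_nat_mul]; ring_nf
      _ ≤ Real.exp (-(T : ℝ)/(2*κ)) := by
          apply Real.exp_le_exp.mpr
          rw [neg_div, neg_div, neg_le_neg_iff]
          apply div_le_div_of_nonneg_left (by positivity) hκpos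
          linarith
  -- conclude
  have : (⟪α • θ T, θs⟫ : ℝ) = α * ⟪θ T, θs⟫ := real_inner_smul_left _ _ _
  rw [this]
  calc |α * ⟪θ T, θs⟫ - α| = |α| * |(⟪θ T, θs⟫ : ℝ) - 1| := by
        rw [← abs_mul]; ring_nf
    _ ≤ |α| * (r ^ T) := mul_le_mul_of_nonneg_left habs (abs_nonneg α)
    _ ≤ |α| * Real.exp (-(T : ℝ)/(2*κ)) := mul_le_mul_of_nonneg_left hrexp (abs_nonneg α)
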